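/- Let S be an ordered abelian semigroup and u ∈ S compact. If u is (m,n)-decomposable with n < m, meaning there exist x_1, …, x_m ∈ S with x_1 + ⋯ + x_m ≤ u and u ≤ n·x_j for all j, then n·u is properly infinite. -/

import Mathlib

/-- `x` is way below `y`: whenever `y` is the supremum of an increasing sequence,
`x` is dominated by some term of the sequence. -/
def WayBelow {S : Type*} [Preorder S] (x y : S) : Prop :=
  ∀ f : ℕ → S, Monotone f → IsLUB (Set.range f) y → ∃ i, x ≤ f i

/-- In a positively ordered abelian monoid, if a compact element `u` is
`(m,n)`-decomposable with `n < m`, i.e. there are `x 1, …, x m` with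
`x 1 + ⋯ + x m ≤ u` and `u ≤ n • x j` for all `j`, then `n • u` is properly infinite:
`(2 * n) • u ≤ n • u`. -/
theorem decomposable_properly_infinite {S : Type*} [AddCommMonoid S] [PartialOrder S] [IsOrderedAddMonoid S]
    (hpos : ∀ s : S, 0 ≤ s)
    (u : S) (hu : WayBelow u u)
    (m n : ℕ) (hn : 1 ≤ n) (hnm : n < m)
    (x : Fin m → S)
    (hsum : ∑ j, x j ≤ u)
    (hx : ∀ j, u ≤ n • x j) :
    (2 * n) • u ≤ n • u := by
  have key : m • u ≤ n • u := by
    calc m • u = ∑ _j : Fin m, u := by simp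
    _ ≤ ∑ j, n • x j := Finset.sum_le_sum fun j _ => hx j
    _ = n • ∑ j, x j := (Finset.smul_sum).symm
    _ ≤ n • u := nsmul_le_nsmul_right hsum n
  have step : (n + 1) • u ≤ n • u :=
    le_trans (nsmul_le_nsmul_left (hpos u) hnm) key
  have all : ∀ k : ℕ, (n + k) • u ≤ n • u := by
    intro k
    induction k with
    | zero => simp
    | succ k ih =>
      calc (n + (k + 1)) • u = (n + k) • u + u := by
            rw [← add_assoc, add_nsmul, one_nsmul]
      _ ≤ n • u + u := add_le_add_left ih u
      _ = (n + 1) • u := by rw [add_nsmul, one_nsmul]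
      _ ≤ n • u := step
  calc (2 * n) • u = (n + n) • u := by ring_nf
  _ ≤ n • u := all n
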